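/- Let q ∈ (0,1), r > 0, ν ∈ (0,1], and let a : ℝ → ℝ be a measurable function with ν ≤ a(s) ≤ ν^{-1} for all s. Let p : ℝᵈ → ℝ be given by p(x) = ℓ₀ + ∑_{β=1}^{d−1} ℓ_β x^β + ∫₀^{xᵈ} a(s)^{-1}·(ℓ_d − ∑_{β=1}^{d−1} b_β(s) ℓ_β) ds, where b_β : ℝ → ℝ are measurable with |b_β(s)| ≤ ν^{-1}. Suppose ⨍_{B_r(0)} |p(x)|^q dx ≤ C₀^q·r^{q(1+δ)} for constants C₀ ≥ 0, δ > 0. Then there exists N depending only on d, q, ν, δ such that |ℓ₀| ≤ N·C₀·r^{1+δ} and |ℓ_β| ≤ N·C₀·r^{δ} for all β = 1, …, d. -/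

import Mathlib

open MeasureTheory Set Filter
open scoped NNReal ENNReal

private lemma intInt {h : ℝ → ℝ} (hm : Measurable h) {C : ℝ} (hC : ∀ s, |h s| ≤ C) (u v : ℝ) :
    IntervalIntegrable h volume u v := by
  have key : ∀ u v : ℝ, IntegrableOn h (Set.Ioc u v) volume := by
    intro u v
    refine Integrable.mono' (g := fun _ => C) (integrableOn_const measure_Ioc_lt_top.ne)
      hm.aestronglyMeasurable.restrict (ae_of_all _ fun s => ?_)
    rw [Real.norm_eq_abs]; exact hC s
  exact ⟨key u v, key v u⟩

private lemma rpow_add_le' {x y q : ℝ} (hx : 0 ≤ x) (hy : 0 ≤ y) (hq0 : 0 ≤ q) (hq1 : q ≤ 1) :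
    (x + y) ^ q ≤ x ^ q + y ^ q := by
  have := NNReal.rpow_add_le_add_rpow x.toNNReal y.toNNReal hq0 hq1
  have h2 : ((x.toNNReal + y.toNNReal : ℝ≥0) : ℝ) = x + y := by
    simp [Real.coe_toNNReal _ hx, Real.coe_toNNReal _ hy]
  calc (x + y) ^ q = (((x.toNNReal + y.toNNReal : ℝ≥0) : ℝ)) ^ q := by rw [h2]
    _ = ((x.toNNReal + y.toNNReal) ^ q : ℝ≥0) := by rw [← NNReal.coe_rpow]
    _ ≤ ((x.toNNReal ^ q + y.toNNReal ^ q : ℝ≥0) : ℝ) := by exact_mod_cast this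
    _ = x ^ q + y ^ q := by
        push_cast [NNReal.coe_rpow, Real.coe_toNNReal _ hx, Real.coe_toNNReal _ hy]; ring

private lemma rpow_cancel {c q : ℝ} (hc : 0 ≤ c) (hq0 : 0 < q) : (c ^ (1/q)) ^ q = c := by
  rw [← Real.rpow_mul hc, one_div_mul_cancel hq0.ne', Real.rpow_one]

private lemma two_rpow_trick {X Y Z W q : ℝ} (hq0 : 0 < q) (hX : 0 ≤ X) (hY : 0 ≤ Y)
    (hZ : 0 ≤ Z) (hYW : Y ≤ W) (hZW : Z ≤ W) (h : X ^ q ≤ Y ^ q + Z ^ q) :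
    X ≤ 2 ^ (1/q) * W := by
  have hW : 0 ≤ W := hY.trans hYW
  have h2 : X ^ q ≤ 2 * W ^ q := by
    have h3 := Real.rpow_le_rpow hY hYW hq0.le
    have h4 := Real.rpow_le_rpow hZ hZW hq0.le
    linarith
  have h3 : (2:ℝ) * W ^ q = (2 ^ (1/q) * W) ^ q := by
    rw [Real.mul_rpow (by positivity) hW, rpow_cancel (by norm_num) hq0]
  rw [h3] at h2
  exact (Real.rpow_le_rpow_iff hX (by positivity) hq0).1 h2

private lemma master {E : Type*} [MeasurableSpace E] {μ : Measure E} {Bs As : Set E}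
    (hAs : MeasurableSet As) (hsub : As ⊆ Bs) (hBfin : μ Bs ≠ ⊤)
    {g : E → ℝ} {q : ℝ} (hq0 : 0 < q) (hq1 : q ≤ 1)
    (hg_int : IntegrableOn (fun x => |g x| ^ q) Bs μ)
    {K D M : ℝ} (hK : 0 ≤ K) (hD : 0 ≤ D)
    (hbd : ∀ x ∈ As, K ≤ |g x| + D)
    (hM : ∫ x in Bs, |g x| ^ q ∂μ ≤ M) :
    K ^ q * (μ As).toReal ≤ M + D ^ q * (μ As).toReal := by
  have hAfin : μ As ≠ ⊤ := fun h => hBfin (eq_top_iff.2 (h ▸ measure_mono hsub))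
  have hintA : IntegrableOn (fun x => |g x| ^ q) As μ := hg_int.mono_set hsub
  have hintA2 : IntegrableOn (fun x => |g x| ^ q + D ^ q) As μ :=
    hintA.add (integrableOn_const hAfin)
  have step1 : ∫ _ in As, K ^ q ∂μ ≤ ∫ x in As, |g x| ^ q + D ^ q ∂μ := by
    refine setIntegral_mono_on (integrableOn_const hAfin) hintA2 hAs ?_
    intro x hx
    calc K ^ q ≤ (|g x| + D) ^ q :=
          Real.rpow_le_rpow hK (hbd x hx) hq0.le
      _ ≤ |g x| ^ q + D ^ q := rpow_add_le' (abs_nonneg _) hD hq0.le hq1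
  have step2 : ∫ x in As, |g x| ^ q + D ^ q ∂μ
      = (∫ x in As, |g x| ^ q ∂μ) + D ^ q * (μ As).toReal := by
    rw [integral_add hintA (integrableOn_const hAfin), setIntegral_const]
    rw [smul_eq_mul, Measure.real]; ring
  have step3 : ∫ x in As, |g x| ^ q ∂μ ≤ ∫ x in Bs, |g x| ^ q ∂μ :=
    setIntegral_mono_set hg_int (ae_of_all _ fun x => Real.rpow_nonneg (abs_nonneg _) _)
      (HasSubset.Subset.eventuallyLE hsub)
  have step0 : ∫ _ in As, K ^ q ∂μ = K ^ q * (μ As).toReal := by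
    rw [setIntegral_const, smul_eq_mul, mul_comm]; rfl
  linarith [step1, step2.le, step3, hM]

set_option maxHeartbeats 2000000 in
theorem stmt5 (m : ℕ) (q ν δ : ℝ) (hq : q ∈ Set.Ioo (0:ℝ) 1) (hν : ν ∈ Set.Ioc (0:ℝ) 1)
    (hδ : 0 < δ) :
    ∃ N : ℝ, ∀ (a : ℝ → ℝ) (b : Fin m → ℝ → ℝ) (ℓ₀ ℓd r C₀ : ℝ) (ℓ : Fin m → ℝ),
      Measurable a → (∀ β, Measurable (b β)) →
      (∀ s, ν ≤ a s ∧ a s ≤ ν⁻¹) → (∀ β s, |b β s| ≤ ν⁻¹) →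
      0 < r → 0 ≤ C₀ →
      (⨍ x in Metric.ball (0 : EuclideanSpace ℝ (Fin (m+1))) r,
          |ℓ₀ + (∑ β : Fin m, ℓ β * x β.castSucc) +
            ∫ s in (0:ℝ)..(x (Fin.last m)),
              (a s)⁻¹ * (ℓd - ∑ β : Fin m, b β s * ℓ β)| ^ q)
        ≤ C₀ ^ q * r ^ (q * (1 + δ)) →
      |ℓ₀| ≤ N * C₀ * r ^ (1 + δ) ∧ (∀ β, |ℓ β| ≤ N * C₀ * r ^ δ) ∧ |ℓd| ≤ N * C₀ * r ^ δ := by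
  obtain ⟨hq0, hq1⟩ := hq
  obtain ⟨hν0, hν1⟩ := hν
  have hq1' : q ≤ 1 := hq1.le
  have hνi0 : 0 < ν⁻¹ := inv_pos.2 hν0
  -- constants
  set cB : ℝ := 2^(m+1) * (10 * ((m:ℝ)+1)^m) with hcBdef
  have hcB0 : 0 < cB := by positivity
  set N₁ : ℝ := (2*cB) ^ (1/q) with hN₁def
  have hN₁0 : 0 < N₁ := Real.rpow_pos_of_pos (by positivity) _
  set N₂ : ℝ := N₁ * (1 + 2*ν⁻¹*ν⁻¹*(m:ℝ)) with hN₂def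
  have hN₂0 : 0 < N₂ := by positivity
  set N₃ : ℝ := ν⁻¹ * 2^(1/q) * N₂ with hN₃def
  have hN₃0 : 0 < N₃ := by positivity
  set N₄ : ℝ := (m:ℝ)*N₁*(1+ν⁻¹*ν⁻¹) + ν⁻¹*N₃ with hN₄def
  have hN₄0 : 0 ≤ N₄ := by positivity
  refine ⟨2^(1/q)*(1+N₄) + N₁ + N₃, ?_⟩
  intro a b ℓ₀ ℓd r C₀ ℓ ha hb haν hbν hr hC₀ havg
  have ha_pos : ∀ s, 0 < a s := fun s => lt_of_lt_of_le hν0 (haν s).1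
  have hainv : ∀ s, ν ≤ (a s)⁻¹ ∧ (a s)⁻¹ ≤ ν⁻¹ := by
    intro s
    constructor
    · rw [← inv_inv ν]
      exact inv_anti₀ (ha_pos s) (haν s).2
    · exact inv_anti₀ hν0 (haν s).1
  set S : ℝ := ∑ β : Fin m, |ℓ β| with hSdef
  have hS0 : 0 ≤ S := Finset.sum_nonneg fun β _ => abs_nonneg _
  set f : ℝ → ℝ := fun s => (a s)⁻¹ * (ℓd - ∑ β : Fin m, b β s * ℓ β) with hfdef
  have hfm : Measurable f := by
    apply Measurable.mul
    · exact ha.inv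
    · exact measurable_const.sub (Finset.measurable_sum _ fun β _ => (hb β).mul_const _)
  set Cf : ℝ := ν⁻¹ * (|ℓd| + ν⁻¹ * S) with hCfdef
  have hCf0 : 0 ≤ Cf := by positivity
  have hsum_b : ∀ s, |∑ β : Fin m, b β s * ℓ β| ≤ ν⁻¹ * S := by
    intro s
    calc |∑ β : Fin m, b β s * ℓ β| ≤ ∑ β : Fin m, |b β s * ℓ β| :=
          Finset.abs_sum_le_sum_abs _ _
      _ ≤ ∑ β : Fin m, ν⁻¹ * |ℓ β| := Finset.sum_le_sum fun β _ => by
          rw [abs_mul]; exact mul_le_mul_of_nonneg_right (hbν β s) (abs_nonneg _)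
      _ = ν⁻¹ * S := by rw [hSdef, Finset.mul_sum]
  have hfb : ∀ s, |f s| ≤ Cf := by
    intro s
    rw [hfdef]
    simp only
    rw [abs_mul]
    have h1 : |(a s)⁻¹| ≤ ν⁻¹ := by
      rw [abs_of_pos (inv_pos.2 (ha_pos s))]; exact (hainv s).2
    have h2 : |ℓd - ∑ β : Fin m, b β s * ℓ β| ≤ |ℓd| + ν⁻¹ * S :=
      (abs_sub _ _).trans (by linarith [hsum_b s])
    calc |(a s)⁻¹| * |ℓd - ∑ β : Fin m, b β s * ℓ β|
        ≤ ν⁻¹ * (|ℓd| + ν⁻¹ * S) := by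
          apply mul_le_mul h1 h2 (abs_nonneg _) hνi0.le
      _ = Cf := hCfdef.symm
  have hfint : ∀ u v, IntervalIntegrable f volume u v := intInt hfm hfb
  have hFcont : Continuous fun t => ∫ s in (0:ℝ)..t, f s :=
    intervalIntegral.continuous_primitive hfint 0
  have hFb : ∀ t : ℝ, |∫ s in (0:ℝ)..t, f s| ≤ Cf * |t| := by
    intro t
    have := intervalIntegral.norm_integral_le_of_norm_le_const
      (C := Cf) (f := f) (a := (0:ℝ)) (b := t) (fun s _ => by rw [Real.norm_eq_abs]; exact hfb s)
    simpa using this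
  set p : EuclideanSpace ℝ (Fin (m+1)) → ℝ := fun x =>
    ℓ₀ + (∑ β : Fin m, ℓ β * x β.castSucc) + ∫ s in (0:ℝ)..(x (Fin.last m)), f s with hpdef
  have havg' : (⨍ x in Metric.ball (0 : EuclideanSpace ℝ (Fin (m+1))) r, |p x| ^ q)
      ≤ C₀ ^ q * r ^ (q * (1 + δ)) := by
    simpa only [hpdef, hfdef] using havg
  have hsum_cont : Continuous fun x : EuclideanSpace ℝ (Fin (m+1)) =>
      ∑ β : Fin m, ℓ β * x β.castSucc := by
    apply continuous_finset_sum
    intro β _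
    exact continuous_const.mul ((continuous_apply _).comp (PiLp.continuous_ofLp 2 _))
  have hpcont : Continuous p := by
    rw [hpdef]
    exact (continuous_const.add hsum_cont).add (hFcont.comp ((continuous_apply _).comp (PiLp.continuous_ofLp 2 _)))
  -- generic integrability of |g|^q on the ball for continuous g
  set B : Set (EuclideanSpace ℝ (Fin (m+1))) := Metric.ball 0 r with hBdef
  have hcont_int : ∀ g : EuclideanSpace ℝ (Fin (m+1)) → ℝ, Continuous g →
      IntegrableOn (fun x => |g x| ^ q) B volume := by
    intro g hg
    refine ((hg.abs.rpow_const fun x => Or.inr hq0.le).continuousOn.integrableOn_compact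
      (isCompact_closedBall 0 r)).mono_set Metric.ball_subset_closedBall
  have hIntB : IntegrableOn (fun x => |p x| ^ q) B volume := hcont_int p hpcont
  have hμB0 : (0:ℝ≥0∞) < volume B := Metric.measure_ball_pos _ _ hr
  have hμBfin : volume B ≠ ⊤ := measure_ball_lt_top.ne
  set μB : ℝ := (volume B).toReal with hμBdef
  have hμB0' : 0 < μB := ENNReal.toReal_pos hμB0.ne' hμBfin
  set ε : ℝ := C₀ * r ^ (1+δ) with hεdef
  have hε0 : 0 ≤ ε := by positivity
  have hrpow : r ^ (1+δ) = r * r ^ δ := by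
    rw [Real.rpow_add hr, Real.rpow_one]
  have hεq : ε ^ q = C₀ ^ q * r ^ (q * (1+δ)) := by
    rw [hεdef, Real.mul_rpow hC₀ (Real.rpow_nonneg hr.le _), ← Real.rpow_mul hr.le,
      mul_comm (1+δ) q]
  have hIB : ∫ x in B, |p x| ^ q ≤ μB * ε ^ q := by
    have h1 := havg'
    rw [setAverage_eq, smul_eq_mul] at h1
    rw [hεq]
    calc ∫ x in B, |p x| ^ q = μB * (μB⁻¹ * ∫ x in B, |p x| ^ q) := by
          field_simp
      _ ≤ μB * (C₀ ^ q * r ^ (q * (1+δ))) := by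
          apply mul_le_mul_of_nonneg_left _ hμB0'.le
          exact h1

  -- coordinate bound
  have hcoord : ∀ (x : EuclideanSpace ℝ (Fin (m+1))) (j : Fin (m+1)), |x j| ≤ ‖x‖ := by
    intro x j
    have h1 : ‖x j‖ ^ 2 ≤ ∑ k, ‖x k‖ ^ 2 :=
      Finset.single_le_sum (f := fun k => ‖x k‖ ^ 2) (fun k _ => by positivity) (Finset.mem_univ j)
    calc |x j| = Real.sqrt (‖x j‖ ^ 2) := by
          rw [Real.sqrt_sq_eq_abs, Real.norm_eq_abs, abs_abs]
      _ ≤ Real.sqrt (∑ k, ‖x k‖ ^ 2) := Real.sqrt_le_sqrt h1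
      _ = ‖x‖ := (EuclideanSpace.norm_eq x).symm
  -- flips
  set σ : Fin (m+1) → (EuclideanSpace ℝ (Fin (m+1)) ≃ₗᵢ[ℝ] EuclideanSpace ℝ (Fin (m+1))) :=
    fun i => LinearIsometryEquiv.piLpCongrRight 2
      (fun j => if j = i then LinearIsometryEquiv.neg ℝ else LinearIsometryEquiv.refl ℝ ℝ)
    with hσdef
  have hσ_apply : ∀ (i : Fin (m+1)) (x : EuclideanSpace ℝ (Fin (m+1))) (j : Fin (m+1)),
      σ i x j = if j = i then -(x j) else x j := by
    intro i x j
    rw [hσdef]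
    simp [LinearIsometryEquiv.piLpCongrRight_apply, PiLp.toLp_apply,
      apply_ite (fun e : ℝ ≃ₗᵢ[ℝ] ℝ => e (x j))]
  have hσ_pre : ∀ i, σ i ⁻¹' B = B := by
    intro i
    rw [hBdef]
    ext x
    simp [Metric.mem_ball, dist_eq_norm]
  have hflip : ∀ i : Fin (m+1),
      ∫ x in B, |p x - p (σ i x)| ^ q ≤ 2 * (μB * ε ^ q) := by
    intro i
    have hmp := (σ i).measurePreserving
    have hme : MeasurableEmbedding (σ i) := (σ i).toHomeomorph.measurableEmbedding
    have hint2 : ∫ x in B, |p (σ i x)| ^ q = ∫ y in B, |p y| ^ q := by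
      have h := hmp.setIntegral_preimage_emb hme (fun y => |p y| ^ q) B
      rwa [hσ_pre i] at h
    have hIntσ : IntegrableOn (fun x => |p (σ i x)| ^ q) B volume :=
      hcont_int _ (hpcont.comp (σ i).continuous)
    have hIntD : IntegrableOn (fun x => |p x - p (σ i x)| ^ q) B volume :=
      hcont_int _ (hpcont.sub (hpcont.comp (σ i).continuous))
    calc ∫ x in B, |p x - p (σ i x)| ^ q
        ≤ ∫ x in B, (|p x| ^ q + |p (σ i x)| ^ q) := by
          refine setIntegral_mono hIntD (hIntB.add hIntσ) fun x => ?_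
          calc |p x - p (σ i x)| ^ q ≤ (|p x| + |p (σ i x)|) ^ q :=
                Real.rpow_le_rpow (abs_nonneg _) (abs_sub _ _) hq0.le
            _ ≤ _ := rpow_add_le' (abs_nonneg _) (abs_nonneg _) hq0.le hq1'
      _ = (∫ x in B, |p x| ^ q) + ∫ x in B, |p (σ i x)| ^ q := integral_add hIntB hIntσ
      _ = (∫ x in B, |p x| ^ q) + ∫ x in B, |p x| ^ q := by rw [hint2]
      _ ≤ 2 * (μB * ε ^ q) := by linarith [hIB]
  -- boxes
  set w : ℝ := r / ((m:ℝ)+1) with hwdef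
  have hw0 : 0 < w := by positivity
  set Ib : Fin (m+1) → Fin (m+1) → Set ℝ :=
    fun i j => if j = i then Set.Ioo (r/2) (3*r/5) else Set.Ioo (-(w/2)) (w/2) with hIbdef
  set A : Fin (m+1) → Set (EuclideanSpace ℝ (Fin (m+1))) :=
    fun i => {x | ∀ j, x j ∈ Ib i j} with hAdef
  have hIbmeas : ∀ i j, MeasurableSet (Ib i j) := by
    intro i j; rw [hIbdef]; dsimp only; split <;> exact measurableSet_Ioo
  have hA_eq : ∀ i, A i = (MeasurableEquiv.toLp 2 (Fin (m+1) → ℝ)).symm ⁻¹'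
      (Set.univ.pi (Ib i)) := by
    intro i
    rw [hAdef]
    ext x
    simp only [Set.mem_setOf_eq, Set.mem_preimage, Set.mem_univ_pi]
    exact ⟨fun h j => h j, fun h j => h j⟩
  have hA_meas : ∀ i, MeasurableSet (A i) := fun i => by
    rw [hA_eq]
    exact (MeasurableEquiv.toLp 2 (Fin (m+1) → ℝ)).symm.measurable
      (MeasurableSet.univ_pi fun j => hIbmeas i j)
  set vA : ℝ := (r/10) * w ^ m with hvAdef
  have hvA0 : 0 < vA := by positivity
  have hA_vol : ∀ i, (volume (A i)).toReal = vA := by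
    intro i
    rw [hA_eq, (EuclideanSpace.volume_preserving_symm_measurableEquiv_toLp (Fin (m+1))).measure_preimage
      (MeasurableSet.univ_pi fun j => hIbmeas i j).nullMeasurableSet, volume_pi_pi]
    have hvol : ∀ j, volume (Ib i j)
        = if j = i then ENNReal.ofReal (r/10) else ENNReal.ofReal w := by
      intro j; rw [hIbdef]; dsimp only; split
      · rw [Real.volume_Ioo]; congr 1; ring
      · rw [Real.volume_Ioo]; congr 1; ring
    rw [Finset.prod_congr rfl fun j _ => hvol j,
      ← Finset.mul_prod_erase Finset.univ _ (Finset.mem_univ i), if_pos rfl,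
      Finset.prod_congr rfl fun j hj => if_neg (Finset.ne_of_mem_erase hj), Finset.prod_const,
      Finset.card_erase_of_mem (Finset.mem_univ i), Finset.card_univ, Fintype.card_fin,
      Nat.add_sub_cancel]
    rw [ENNReal.toReal_mul, ENNReal.toReal_pow, ENNReal.toReal_ofReal (by positivity),
      ENNReal.toReal_ofReal hw0.le, hvAdef]
  have hA_sub : ∀ i, A i ⊆ B := by
    intro i x hx
    have hxi : x i ∈ Set.Ioo (r/2) (3*r/5) := by
      have h := hx i; rw [hIbdef] at h; dsimp only at h; rwa [if_pos rfl] at h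
    have hbound : ∀ j, ‖x j‖ ^ 2 ≤ (if j = i then (3*r/5)^2 else (w/2)^2) := by
      intro j
      by_cases hj : j = i
      · subst hj
        rw [if_pos rfl, Real.norm_eq_abs, sq_abs]
        nlinarith [hxi.1, hxi.2, hr]
      · rw [if_neg hj, Real.norm_eq_abs, sq_abs]
        have h := hx j
        rw [hIbdef] at h; dsimp only at h; rw [if_neg hj] at h
        nlinarith [h.1, h.2]
    have hsum : ∑ j, ‖x j‖ ^ 2 ≤ (3*r/5)^2 + (m:ℝ) * (w/2)^2 := by
      calc ∑ j, ‖x j‖ ^ 2 ≤ ∑ j, (if j = i then (3*r/5)^2 else (w/2)^2) :=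
            Finset.sum_le_sum fun j _ => hbound j
        _ = (3*r/5)^2 + (m:ℝ) * (w/2)^2 := by
            rw [← Finset.add_sum_erase Finset.univ _ (Finset.mem_univ i), if_pos rfl,
              Finset.sum_congr rfl fun j hj => if_neg (Finset.ne_of_mem_erase hj),
              Finset.sum_const, Finset.card_erase_of_mem (Finset.mem_univ i),
              Finset.card_univ, Fintype.card_fin, Nat.add_sub_cancel, nsmul_eq_mul]
    have hlt : (3*r/5)^2 + (m:ℝ) * (w/2)^2 < r^2 := by
      have hm0 : (0:ℝ) ≤ (m:ℝ) := Nat.cast_nonneg m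
      have hm1 : (0:ℝ) < ((m:ℝ)+1)^2 := by positivity
      have expand : (w/2)^2 = r^2 / (((m:ℝ)+1)^2 * 4) := by
        rw [hwdef]; field_simp; ring
      rw [expand]
      have h2 : (m:ℝ) * (r^2 / (((m:ℝ)+1)^2*4)) ≤ r^2/4 := by
        rw [← mul_div_assoc, div_le_div_iff₀ (by positivity) (by norm_num)]
        have hmle : (m:ℝ) ≤ ((m:ℝ)+1)^2 := by nlinarith [hm0]
        nlinarith [mul_le_mul_of_nonneg_right hmle (sq_nonneg r)]
      nlinarith [mul_pos hr hr]
    rw [hBdef, Metric.mem_ball, dist_zero_right, EuclideanSpace.norm_eq, Real.sqrt_lt' hr]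
    exact lt_of_le_of_lt hsum hlt
  have hμB_le : μB ≤ cB * vA := by
    have hBsub : B ⊆ (MeasurableEquiv.toLp 2 (Fin (m+1) → ℝ)).symm ⁻¹'
        (Set.univ.pi fun _ : Fin (m+1) => Set.Ioo (-r) r) := by
      intro x hx
      simp only [Set.mem_preimage, Set.mem_univ_pi]
      intro j
      have h1 : |x j| < r := by
        refine lt_of_le_of_lt (hcoord x j) ?_
        rw [hBdef] at hx
        simpa [dist_zero_right] using hx
      exact ⟨(abs_lt.1 h1).1, (abs_lt.1 h1).2⟩
    have h2 : volume B ≤ ENNReal.ofReal (2*r) ^ (m+1) := by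
      refine (measure_mono hBsub).trans_eq ?_
      rw [(EuclideanSpace.volume_preserving_symm_measurableEquiv_toLp (Fin (m+1))).measure_preimage
        (MeasurableSet.univ_pi fun _ => measurableSet_Ioo).nullMeasurableSet, volume_pi_pi]
      rw [Finset.prod_congr rfl fun (j : Fin (m+1)) _ =>
        (by rw [Real.volume_Ioo]; congr 1; ring :
          volume (Set.Ioo (-r) r) = ENNReal.ofReal (2*r)), Finset.prod_const,
        Finset.card_univ, Fintype.card_fin]
    have h3 : μB ≤ (2*r)^(m+1) := by
      calc μB ≤ (ENNReal.ofReal (2*r) ^ (m+1)).toReal :=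
            ENNReal.toReal_mono (by exact ENNReal.pow_ne_top ENNReal.ofReal_ne_top) h2
        _ = (2*r)^(m+1) := by
            rw [ENNReal.toReal_pow, ENNReal.toReal_ofReal (by positivity)]
    calc μB ≤ (2*r)^(m+1) := h3
      _ = cB * vA := by
          rw [hcBdef, hvAdef, hwdef]
          field_simp
          have hm1 : ((1:ℝ)+m)⁻¹^m * (1+m)^m = 1 := by rw [← mul_pow, inv_mul_cancel₀ (by positivity), one_pow]
          linear_combination (-(r*r^m*2^m*2)) * hm1

  -- bounds on ℓ β
  have hβ : ∀ β : Fin m, |ℓ β| ≤ N₁ * C₀ * r ^ δ := by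
    intro β
    have hil : (Fin.last m) ≠ β.castSucc := (Fin.castSucc_lt_last β).ne'
    have hdiff : ∀ x : EuclideanSpace ℝ (Fin (m+1)),
        p x - p (σ β.castSucc x) = 2 * ℓ β * x β.castSucc := by
      intro x
      have hlast : σ β.castSucc x (Fin.last m) = x (Fin.last m) := by
        rw [hσ_apply, if_neg hil]
      have hsum2 : (∑ γ : Fin m, ℓ γ * x γ.castSucc) -
          (∑ γ : Fin m, ℓ γ * (σ β.castSucc x) γ.castSucc) = 2 * ℓ β * x β.castSucc := by
        rw [← Finset.sum_sub_distrib, Finset.sum_eq_single β]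
        · rw [hσ_apply, if_pos rfl]; ring
        · intro γ _ hγ
          rw [hσ_apply, if_neg fun h => hγ (Fin.castSucc_injective m h)]; ring
        · intro h; exact absurd (Finset.mem_univ β) h
      rw [hpdef]; dsimp only
      rw [hlast]
      linarith [hsum2]
    have hKle : ∀ x ∈ A β.castSucc, |ℓ β| * r ≤ |p x - p (σ β.castSucc x)| + 0 := by
      intro x hx
      have hxi := hx β.castSucc
      rw [hIbdef] at hxi; dsimp only at hxi; rw [if_pos rfl] at hxi
      have h1 : r/2 ≤ |x β.castSucc| := le_trans hxi.1.le (le_abs_self _)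
      rw [hdiff x, add_zero]
      calc |ℓ β| * r = 2 * |ℓ β| * (r/2) := by ring
        _ ≤ 2 * |ℓ β| * |x β.castSucc| :=
            mul_le_mul_of_nonneg_left h1 (by positivity)
        _ = |2 * ℓ β * x β.castSucc| := by rw [abs_mul, abs_mul, abs_two]
    have hmaster := master (hA_meas β.castSucc) (hA_sub β.castSucc) hμBfin hq0 hq1'
      (hcont_int _ (hpcont.sub (hpcont.comp (σ β.castSucc).continuous)))
      (by positivity : (0:ℝ) ≤ |ℓ β| * r) le_rfl hKle (hflip β.castSucc)
    rw [hA_vol, Real.zero_rpow hq0.ne', zero_mul, add_zero] at hmaster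
    have h5 : (|ℓ β| * r) ^ q * vA ≤ (N₁ * ε)^q * vA := by
      refine hmaster.trans ?_
      have hNe : (N₁ * ε)^q = 2 * cB * ε^q := by
        rw [Real.mul_rpow hN₁0.le hε0, hN₁def, rpow_cancel (by positivity) hq0]
      rw [hNe]
      have hεq0 : 0 ≤ ε ^ q := Real.rpow_nonneg hε0 _
      calc 2*(μB * ε^q) ≤ 2*((cB*vA) * ε^q) := by
            apply mul_le_mul_of_nonneg_left (mul_le_mul_of_nonneg_right hμB_le hεq0)
              (by norm_num)
        _ = 2 * cB * ε ^ q * vA := by ring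
    have h6 : |ℓ β| * r ≤ N₁ * ε :=
      (Real.rpow_le_rpow_iff (by positivity) (by positivity) hq0).1
        (le_of_mul_le_mul_right h5 hvA0)
    rw [hεdef, hrpow] at h6
    have h7 : N₁ * (C₀ * (r * r ^ δ)) = (N₁ * C₀ * r ^ δ) * r := by ring
    rw [h7] at h6
    exact le_of_mul_le_mul_right h6 hr
  have hSb : S ≤ (m:ℝ) * (N₁ * C₀ * r ^ δ) := by
    rw [hSdef]
    calc ∑ β : Fin m, |ℓ β| ≤ ∑ _β : Fin m, N₁ * C₀ * r ^ δ :=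
          Finset.sum_le_sum fun β _ => hβ β
      _ = (m:ℝ) * (N₁ * C₀ * r ^ δ) := by
          rw [Finset.sum_const, Finset.card_univ, Fintype.card_fin, nsmul_eq_mul]
  -- bound on ℓd
  have hℓd : |ℓd| ≤ N₃ * C₀ * r ^ δ := by
    have hdiff : ∀ x : EuclideanSpace ℝ (Fin (m+1)),
        p x - p (σ (Fin.last m) x) = ∫ s in (-(x (Fin.last m)))..(x (Fin.last m)), f s := by
      intro x
      have hlast : σ (Fin.last m) x (Fin.last m) = -(x (Fin.last m)) := by
        rw [hσ_apply, if_pos rfl]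
      have hsum2 : (∑ γ : Fin m, ℓ γ * (σ (Fin.last m) x) γ.castSucc)
          = ∑ γ : Fin m, ℓ γ * x γ.castSucc := by
        refine Finset.sum_congr rfl fun γ _ => ?_
        rw [hσ_apply, if_neg (Fin.castSucc_lt_last γ).ne]
      rw [hpdef]; dsimp only
      rw [hlast, hsum2]
      have hsub2 : (∫ s in (0:ℝ)..(x (Fin.last m)), f s)
          - ∫ s in (0:ℝ)..(-(x (Fin.last m))), f s
          = ∫ s in (-(x (Fin.last m)))..(x (Fin.last m)), f s :=
        intervalIntegral.integral_interval_sub_left (hfint 0 _) (hfint 0 _)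
      linarith [hsub2]
    have hg1m : Measurable fun s => (a s)⁻¹ * ℓd := ha.inv.mul_const _
    have hg1b : ∀ s, |(a s)⁻¹ * ℓd| ≤ ν⁻¹ * |ℓd| := by
      intro s; rw [abs_mul]
      refine mul_le_mul_of_nonneg_right ?_ (abs_nonneg _)
      rw [abs_of_pos (inv_pos.2 (ha_pos s))]; exact (hainv s).2
    have hg2m : Measurable fun s => (a s)⁻¹ * ∑ β : Fin m, b β s * ℓ β :=
      ha.inv.mul (Finset.measurable_sum _ fun β _ => (hb β).mul_const _)
    have hg2b : ∀ s, |(a s)⁻¹ * ∑ β : Fin m, b β s * ℓ β| ≤ ν⁻¹ * (ν⁻¹ * S) := by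
      intro s; rw [abs_mul]
      refine mul_le_mul ?_ (hsum_b s) (abs_nonneg _) hνi0.le
      rw [abs_of_pos (inv_pos.2 (ha_pos s))]; exact (hainv s).2
    have hainvm : Measurable fun s => (a s)⁻¹ := ha.inv
    have hainvb : ∀ s, |(a s)⁻¹| ≤ ν⁻¹ := by
      intro s; rw [abs_of_pos (inv_pos.2 (ha_pos s))]; exact (hainv s).2
    have hKle : ∀ x ∈ A (Fin.last m),
        ν * r * |ℓd| ≤ |p x - p (σ (Fin.last m) x)| + 2*r*(ν⁻¹*ν⁻¹*S) := by
      intro x hx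
      have hxi := hx (Fin.last m)
      rw [hIbdef] at hxi; dsimp only at hxi; rw [if_pos rfl] at hxi
      obtain ⟨ht1, ht2⟩ := hxi
      have ht0 : 0 < x (Fin.last m) := lt_trans (by positivity) ht1
      have htr : x (Fin.last m) ≤ r := by linarith
      have hfeq : ∀ s, f s = (a s)⁻¹ * ℓd - (a s)⁻¹ * ∑ β : Fin m, b β s * ℓ β := by
        intro s; rw [hfdef]; ring
      have hdec : (∫ s in (-(x (Fin.last m)))..(x (Fin.last m)), f s)
          = (∫ s in (-(x (Fin.last m)))..(x (Fin.last m)), (a s)⁻¹ * ℓd)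
            - ∫ s in (-(x (Fin.last m)))..(x (Fin.last m)),
                (a s)⁻¹ * ∑ β : Fin m, b β s * ℓ β := by
        rw [← intervalIntegral.integral_sub (intInt hg1m hg1b _ _) (intInt hg2m hg2b _ _)]
        exact intervalIntegral.integral_congr fun s _ => hfeq s
      have hI1eq : (∫ s in (-(x (Fin.last m)))..(x (Fin.last m)), (a s)⁻¹ * ℓd)
          = (∫ s in (-(x (Fin.last m)))..(x (Fin.last m)), (a s)⁻¹) * ℓd :=
        intervalIntegral.integral_mul_const _ _
      have hI1low : 2*(x (Fin.last m))*ν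
          ≤ ∫ s in (-(x (Fin.last m)))..(x (Fin.last m)), (a s)⁻¹ := by
        have hc : (∫ _s in (-(x (Fin.last m)))..(x (Fin.last m)), ν) = 2*(x (Fin.last m))*ν := by
          rw [intervalIntegral.integral_const, smul_eq_mul]; ring
        rw [← hc]
        refine intervalIntegral.integral_mono_on (by linarith) intervalIntegrable_const
          (intInt hainvm hainvb _ _) fun s _ => (hainv s).1
      have hJ : |∫ s in (-(x (Fin.last m)))..(x (Fin.last m)),
          (a s)⁻¹ * ∑ β : Fin m, b β s * ℓ β| ≤ ν⁻¹*(ν⁻¹*S) * (2*(x (Fin.last m))) := by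
        have hb2 := intervalIntegral.norm_integral_le_of_norm_le_const
          (C := ν⁻¹*(ν⁻¹*S)) (a := -(x (Fin.last m))) (b := x (Fin.last m))
          (f := fun s => (a s)⁻¹ * ∑ β : Fin m, b β s * ℓ β)
          (fun s _ => by rw [Real.norm_eq_abs]; exact hg2b s)
        rw [Real.norm_eq_abs] at hb2
        refine hb2.trans (le_of_eq ?_)
        rw [sub_neg_eq_add, abs_of_pos (by linarith)]
        ring
      set t : ℝ := x (Fin.last m)
      set I1 : ℝ := ∫ s in (-t)..t, (a s)⁻¹ with hI1def
      set J : ℝ := ∫ s in (-t)..t, (a s)⁻¹ * ∑ β : Fin m, b β s * ℓ β with hJdef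
      have hI1pos : 0 < I1 := lt_of_lt_of_le (by positivity) hI1low
      have habs : |ℓd| * I1 - |J| ≤ |p x - p (σ (Fin.last m) x)| := by
        rw [hdiff x, hdec, hI1eq]
        calc |ℓd| * I1 - |J| = |I1 * ℓd| - |J| := by
              rw [abs_mul, abs_of_pos hI1pos]; ring
          _ ≤ |I1 * ℓd - J| := abs_sub_abs_le_abs_sub _ _
      have e1 : ν * r * |ℓd| ≤ 2 * t * ν * |ℓd| := by
        have h := mul_le_mul_of_nonneg_left (show r ≤ 2*t by linarith)
          (mul_nonneg hν0.le (abs_nonneg ℓd))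
        calc ν * r * |ℓd| = ν * |ℓd| * r := by ring
          _ ≤ ν * |ℓd| * (2*t) := h
          _ = 2 * t * ν * |ℓd| := by ring
      have e2 : 2 * t * ν * |ℓd| ≤ |ℓd| * I1 := by
        have h := mul_le_mul_of_nonneg_left hI1low (abs_nonneg ℓd)
        calc 2 * t * ν * |ℓd| = |ℓd| * (2*t*ν) := by ring
          _ ≤ |ℓd| * I1 := h
      have e3 : |J| ≤ 2*r*(ν⁻¹*ν⁻¹*S) := by
        refine hJ.trans ?_
        have h := mul_le_mul_of_nonneg_left (show 2*t ≤ 2*r by linarith)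
          (mul_nonneg hνi0.le (mul_nonneg hνi0.le hS0))
        calc ν⁻¹*(ν⁻¹*S) * (2*t) = ν⁻¹*(ν⁻¹*S) * (2*t) := rfl
          _ ≤ ν⁻¹*(ν⁻¹*S) * (2*r) := h
          _ = 2*r*(ν⁻¹*ν⁻¹*S) := by ring
      linarith [habs, e1, e2, e3]
    have hmaster := master (hA_meas (Fin.last m)) (hA_sub (Fin.last m)) hμBfin hq0 hq1'
      (hcont_int _ (hpcont.sub (hpcont.comp (σ (Fin.last m)).continuous)))
      (by positivity : (0:ℝ) ≤ ν * r * |ℓd|)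
      (by positivity : (0:ℝ) ≤ 2*r*(ν⁻¹*ν⁻¹*S)) hKle (hflip (Fin.last m))
    rw [hA_vol] at hmaster
    have hstep : (ν * r * |ℓd|) ^ q ≤ (N₁ * ε) ^ q + (2*r*(ν⁻¹*ν⁻¹*S)) ^ q := by
      have hNe : (N₁*ε)^q = 2*cB*ε^q := by
        rw [Real.mul_rpow hN₁0.le hε0, hN₁def, rpow_cancel (by positivity) hq0]
      have hεq0 : 0 ≤ ε ^ q := Real.rpow_nonneg hε0 _
      have h3 : 2*(μB*ε^q) ≤ (N₁*ε)^q * vA := by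
        rw [hNe]
        calc 2*(μB*ε^q) ≤ 2*((cB*vA)*ε^q) := by
              apply mul_le_mul_of_nonneg_left (mul_le_mul_of_nonneg_right hμB_le hεq0)
                (by norm_num)
          _ = 2*cB*ε^q*vA := by ring
      have h2 : (ν*r*|ℓd|)^q * vA ≤ ((N₁*ε)^q + (2*r*(ν⁻¹*ν⁻¹*S))^q) * vA := by
        refine hmaster.trans ?_
        have hexp : ((N₁*ε)^q + (2*r*(ν⁻¹*ν⁻¹*S))^q) * vA
            = (N₁*ε)^q * vA + (2*r*(ν⁻¹*ν⁻¹*S))^q * vA := by ring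
        rw [hexp]
        linarith [h3]
      exact le_of_mul_le_mul_right h2 hvA0
    have hD2 : 2*r*(ν⁻¹*ν⁻¹*S) ≤ (2*ν⁻¹*ν⁻¹*(m:ℝ)*N₁) * ε := by
      rw [hεdef, hrpow]
      calc 2*r*(ν⁻¹*ν⁻¹*S) ≤ 2*r*(ν⁻¹*ν⁻¹*((m:ℝ)*(N₁*C₀*r^δ))) := by
            apply mul_le_mul_of_nonneg_left
              (mul_le_mul_of_nonneg_left hSb (by positivity)) (by positivity)
        _ = (2*ν⁻¹*ν⁻¹*(m:ℝ)*N₁)*(C₀*(r*r^δ)) := by ring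
    have hfinal : ν * r * |ℓd| ≤ 2^(1/q) * (N₂ * ε) := by
      refine two_rpow_trick hq0 (by positivity) (by positivity) (by positivity) ?_ ?_ hstep
      · refine mul_le_mul_of_nonneg_right ?_ hε0
        rw [hN₂def]
        have hc0 : (0:ℝ) ≤ 2*ν⁻¹*ν⁻¹*(m:ℝ) := by positivity
        have := mul_nonneg hN₁0.le hc0
        linarith [this]
      · refine hD2.trans (mul_le_mul_of_nonneg_right ?_ hε0)
        rw [hN₂def]
        have hc0 : (0:ℝ) ≤ 2*ν⁻¹*ν⁻¹*(m:ℝ) := by positivity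
        have := mul_nonneg hN₁0.le hc0
        linarith [this]
    have h10 : (ν*r) * (N₃ * C₀ * r^δ) = 2^(1/q) * (N₂ * ε) := by
      rw [hN₃def, hεdef, hrpow]
      field_simp
    have h9 : (ν*r) * |ℓd| ≤ (ν*r) * (N₃ * C₀ * r^δ) := by
      rw [h10]
      calc (ν*r)*|ℓd| = ν*r*|ℓd| := by ring
        _ ≤ _ := hfinal
    exact le_of_mul_le_mul_left h9 (by positivity)

  -- bound on ℓ₀
  have hD0 : S*r + Cf*r ≤ N₄ * (C₀ * (r * r^δ)) := by
    have e1 : S * r ≤ (m:ℝ)*(N₁*C₀*r^δ) * r := mul_le_mul_of_nonneg_right hSb hr.le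
    have e3 : Cf * r ≤ (ν⁻¹*(N₃*C₀*r^δ + ν⁻¹*((m:ℝ)*(N₁*C₀*r^δ)))) * r := by
      refine mul_le_mul_of_nonneg_right ?_ hr.le
      rw [hCfdef]
      refine mul_le_mul_of_nonneg_left ?_ hνi0.le
      have h4 := mul_le_mul_of_nonneg_left hSb hνi0.le
      linarith [hℓd, h4]
    calc S*r + Cf*r ≤ (m:ℝ)*(N₁*C₀*r^δ)*r
          + (ν⁻¹*(N₃*C₀*r^δ + ν⁻¹*((m:ℝ)*(N₁*C₀*r^δ))))*r := by linarith
      _ = N₄ * (C₀ * (r * r^δ)) := by rw [hN₄def]; ring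
  have hD0nn : 0 ≤ S*r + Cf*r := add_nonneg (mul_nonneg hS0 hr.le) (mul_nonneg hCf0 hr.le)
  have hℓ₀ : |ℓ₀| ≤ 2^(1/q) * ((1+N₄) * ε) := by
    have hKle : ∀ x ∈ B, |ℓ₀| ≤ |p x| + (S*r + Cf*r) := by
      intro x hx
      have hxn : ‖x‖ ≤ r := by
        rw [hBdef, Metric.mem_ball, dist_zero_right] at hx; exact hx.le
      have h1 : |∑ γ : Fin m, ℓ γ * x γ.castSucc| ≤ S * r := by
        calc |∑ γ : Fin m, ℓ γ * x γ.castSucc| ≤ ∑ γ : Fin m, |ℓ γ * x γ.castSucc| :=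
              Finset.abs_sum_le_sum_abs _ _
          _ ≤ ∑ γ : Fin m, |ℓ γ| * r := Finset.sum_le_sum fun γ _ => by
              rw [abs_mul]
              exact mul_le_mul_of_nonneg_left ((hcoord x _).trans hxn) (abs_nonneg _)
          _ = S * r := by rw [hSdef, ← Finset.sum_mul]
      have h2 : |∫ s in (0:ℝ)..(x (Fin.last m)), f s| ≤ Cf * r := by
        refine (hFb _).trans ?_
        exact mul_le_mul_of_nonneg_left ((hcoord x _).trans hxn) hCf0
      have h3 : |ℓ₀| ≤ |p x| + |∑ γ : Fin m, ℓ γ * x γ.castSucc|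
          + |∫ s in (0:ℝ)..(x (Fin.last m)), f s| := by
        have heq : ℓ₀ = p x - (∑ γ : Fin m, ℓ γ * x γ.castSucc)
            - ∫ s in (0:ℝ)..(x (Fin.last m)), f s := by
          rw [hpdef]; dsimp only; ring
        calc |ℓ₀| = |p x - (∑ γ : Fin m, ℓ γ * x γ.castSucc)
              - ∫ s in (0:ℝ)..(x (Fin.last m)), f s| := by rw [← heq]
          _ ≤ |p x - (∑ γ : Fin m, ℓ γ * x γ.castSucc)|
              + |∫ s in (0:ℝ)..(x (Fin.last m)), f s| := abs_sub _ _
          _ ≤ |p x| + |∑ γ : Fin m, ℓ γ * x γ.castSucc|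
              + |∫ s in (0:ℝ)..(x (Fin.last m)), f s| := by
                linarith [abs_sub (p x) (∑ γ : Fin m, ℓ γ * x γ.castSucc)]
      linarith [h1, h2, h3]
    have hBmeas : MeasurableSet B := by rw [hBdef]; exact measurableSet_ball
    have hmaster := master hBmeas (subset_refl B) hμBfin hq0 hq1' hIntB
      (abs_nonneg ℓ₀) hD0nn hKle hIB
    rw [← hμBdef] at hmaster
    have hstep : |ℓ₀| ^ q ≤ ε ^ q + (S*r + Cf*r) ^ q := by
      have h2 : |ℓ₀|^q * μB ≤ (ε^q + (S*r + Cf*r)^q) * μB := by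
        have hexp : (ε^q + (S*r + Cf*r)^q) * μB = μB * ε^q + (S*r + Cf*r)^q * μB := by ring
        rw [hexp]
        linarith [hmaster]
      exact le_of_mul_le_mul_right h2 hμB0'
    refine two_rpow_trick hq0 (abs_nonneg _) hε0 hD0nn ?_ ?_ hstep
    · have := mul_nonneg hN₄0 hε0
      calc ε = 1 * ε := (one_mul ε).symm
        _ ≤ (1+N₄) * ε := by
            refine mul_le_mul_of_nonneg_right (by linarith [hN₄0]) hε0
    · refine hD0.trans ?_
      rw [hεdef, hrpow]
      have h5 : (0:ℝ) ≤ C₀ * (r * r^δ) := by positivity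
      refine mul_le_mul_of_nonneg_right (by linarith [hN₄0]) h5
  -- final assembly
  have h2q0 : (0:ℝ) < 2^(1/q) := Real.rpow_pos_of_pos (by norm_num) _
  have hrd0 : (0:ℝ) ≤ C₀ * r^δ := by positivity
  have hr1d0 : (0:ℝ) ≤ C₀ * r^(1+δ) := by positivity
  refine ⟨?_, fun β => ?_, ?_⟩
  · refine hℓ₀.trans ?_
    rw [hεdef]
    have heq : (2^(1/q)*(1+N₄) + N₁ + N₃) * C₀ * r^(1+δ)
        = 2^(1/q) * ((1+N₄) * (C₀ * r^(1+δ))) + (N₁+N₃) * (C₀ * r^(1+δ)) := by ring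
    have hnn : 0 ≤ (N₁+N₃) * (C₀ * r^(1+δ)) :=
      mul_nonneg (by linarith [hN₁0, hN₃0]) hr1d0
    rw [heq]
    linarith [hnn]
  · refine (hβ β).trans ?_
    have heq : (2^(1/q)*(1+N₄) + N₁ + N₃) * C₀ * r^δ
        = N₁ * C₀ * r^δ + (2^(1/q)*(1+N₄) + N₃) * (C₀ * r^δ) := by ring
    have hnn : 0 ≤ (2^(1/q)*(1+N₄) + N₃) * (C₀ * r^δ) :=
      mul_nonneg (add_nonneg (mul_nonneg h2q0.le (by linarith [hN₄0])) hN₃0.le) hrd0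
    rw [heq]
    linarith [hnn]
  · refine hℓd.trans ?_
    have heq : (2^(1/q)*(1+N₄) + N₁ + N₃) * C₀ * r^δ
        = N₃ * C₀ * r^δ + (2^(1/q)*(1+N₄) + N₁) * (C₀ * r^δ) := by ring
    have hnn : 0 ≤ (2^(1/q)*(1+N₄) + N₁) * (C₀ * r^δ) :=
      mul_nonneg (add_nonneg (mul_nonneg h2q0.le (by linarith [hN₄0])) hN₁0.le) hrd0
    rw [heq]
    linarith [hnn]
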